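/- Let $G$ be a countable group acting freely on a standard probability space $(X,m)$ by measure-preserving automorphisms $T_g$, let $c\in(0,1)$, and let $(F_k)$ be a sequence of finite subsets of $G$. Suppose $(V_k)$ is a sequence of measurable subsets of $X$ such that each $V_k$ is $(F_k,c)$-invariant, i.e. $m\big(\bigcap_{g\in F_k} T_g V_k\big) > c\, m(V_k)$, and $\sum_k m(V_k) < \infty$. Then for every $\varepsilon>0$ and every measurable set $A'$ with $m(A')>0$, there exists a measurable set $A$ with $m(A'\,\Delta\,A)<\varepsilon$, $m(A)>0$, and a natural number $N$ such that for all $k>N$ and all nonnegative weights $(w_{g,k})_{g\in F_k}$ with $\sum_{g\in F_k} w_{g,k}=1$, one has $\big\|\sum_{g\in F_k} w_{g,k}\,\mathbf{1}_A\circ T_{g^{-1}} - m(A)\big\|_{L^1(m)} > c\, m(V_k)\, m(A)$. -/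

import Mathlib

open MeasureTheory Filter Set

/-- The Lemma of the paper: given a summable sequence of `(F_k, c)`-invariant sets `V_k`,
one can trim any set `A'` of positive measure to a set `A` so that all weighted averages
over `F_k` (for large `k`) deviate from `m A` in `L¹` by more than `c · m(V_k) · m(A)`. -/
theorem weighted_averages_deviation_amenable_lemma
    {X : Type*} [MeasurableSpace X] [StandardBorelSpace X]
    (m : Measure X) [IsProbabilityMeasure m]
    {G : Type*} [Group G] [Countable G]
    (T : G → X → X)
    (hT1 : T 1 = id)
    (hTmul : ∀ g h : G, T (g * h) = T g ∘ T h)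
    (hTmp : ∀ g : G, MeasurePreserving (T g) m m)
    (hfree : ∀ g : G, g ≠ 1 → m {x | T g x = x} = 0)
    (c : ℝ) (hc : c ∈ Set.Ioo (0 : ℝ) 1)
    (F : ℕ → Finset G)
    (V : ℕ → Set X) (hVmeas : ∀ k, MeasurableSet (V k))
    (hVinv : ∀ k, m (⋂ g ∈ F k, T g '' V k) > ENNReal.ofReal c * m (V k))
    (hVsum : ∑' k, m (V k) < ⊤)
    (ε : ℝ) (hε : 0 < ε)
    (A' : Set X) (hA'meas : MeasurableSet A') (hA'pos : 0 < m A') :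
    ∃ A : Set X, MeasurableSet A ∧ m (symmDiff A' A) < ENNReal.ofReal ε ∧ 0 < m A ∧
      ∃ N : ℕ, ∀ k > N, ∀ w : G → ℝ,
        (∀ g ∈ F k, 0 ≤ w g) → (∑ g ∈ F k, w g = 1) →
        ∫ x, |(∑ g ∈ F k, w g * A.indicator (fun _ => (1 : ℝ)) (T g⁻¹ x)) - (m A).toReal| ∂m
          > c * (m (V k)).toReal * (m A).toReal := by
  -- Choose N so that the tail sum of measures is small
  obtain ⟨N, hN⟩ : ∃ N : ℕ, ∑' j, m (V (j + N)) < min (ENNReal.ofReal ε) (m A') := by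
    have h0 : Tendsto (fun n => ∑' j, m (V (j + n))) atTop (nhds 0) :=
      ENNReal.tendsto_sum_nat_add _ hVsum.ne
    have hpos : (0 : ENNReal) < min (ENNReal.ofReal ε) (m A') :=
      lt_min (by simpa using hε) hA'pos
    exact ((h0.eventually_lt_const hpos).exists)
  -- inverse property of the action
  have hTinv : ∀ g : G, ∀ x : X, T g⁻¹ (T g x) = x := by
    intro g x
    have h := congrFun (hTmul g⁻¹ g) x
    rw [inv_mul_cancel, hT1] at h
    exact h.symm
  have himg : ∀ g : G, ∀ k, T g '' V k = T g⁻¹ ⁻¹' V k := by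
    intro g k
    ext x
    constructor
    · rintro ⟨v, hv, rfl⟩
      rwa [mem_preimage, hTinv]
    · intro hx
      refine ⟨T g⁻¹ x, hx, ?_⟩
      have h := hTinv g⁻¹ x
      rwa [inv_inv] at h
  set S : Set X := ⋃ j, V (j + N) with hS
  have hSmeas : MeasurableSet S := MeasurableSet.iUnion fun j => hVmeas _
  have hSm : m S < min (ENNReal.ofReal ε) (m A') :=
    lt_of_le_of_lt (measure_iUnion_le _) hN
  set A : Set X := A' \ S with hA
  have hAmeas : MeasurableSet A := hA'meas.diff hSmeas
  have hApos : 0 < m A := by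
    by_contra h
    push_neg at h
    have h0 : m A = 0 := le_antisymm h zero_le
    have hle : m A' ≤ m A + m S := by
      refine le_trans (measure_mono ?_) (measure_union_le _ _)
      intro x hx
      by_cases hxS : x ∈ S
      · exact Or.inr hxS
      · exact Or.inl ⟨hx, hxS⟩
    rw [h0, zero_add] at hle
    exact absurd (lt_of_le_of_lt hle (lt_of_lt_of_le hSm (min_le_right _ _)))
      (lt_irrefl _)
  have hsymm : m (symmDiff A' A) < ENNReal.ofReal ε := by
    have hsub : symmDiff A' A ⊆ S := by
      intro x hx
      rcases Set.mem_symmDiff.1 hx with ⟨hx1, hx2⟩ | ⟨hx1, hx2⟩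
      · by_contra hxS
        exact hx2 ⟨hx1, hxS⟩
      · exact absurd hx1.1 hx2
    exact lt_of_le_of_lt (measure_mono hsub)
      (lt_of_lt_of_le hSm (min_le_left _ _))
  refine ⟨A, hAmeas, hsymm, hApos, N, ?_⟩
  intro k hk w hw hw1
  have hAV : ∀ x, x ∈ V k → x ∉ A := by
    intro x hx hxA
    refine hxA.2 (mem_iUnion.2 ⟨k - N, ?_⟩)
    rwa [Nat.sub_add_cancel hk.le]
  set W : Set X := ⋂ g ∈ F k, T g '' V k with hWdef
  have hWeq : W = ⋂ g ∈ F k, T g⁻¹ ⁻¹' V k := by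
    rw [hWdef]
    exact iInter₂_congr fun g _ => himg g k
  have hWmeas : MeasurableSet W := by
    rw [hWeq]
    exact MeasurableSet.biInter (Finset.countable_toSet _)
      fun g _ => (hTmp g⁻¹).measurable (hVmeas k)
  have hWsub : ∀ x ∈ W, ∀ g ∈ F k, T g⁻¹ x ∈ V k := by
    intro x hx g hg
    obtain ⟨v, hv, rfl⟩ := (mem_iInter₂.1 hx) g hg
    rwa [hTinv]
  have hWne : m W ≠ ⊤ := (measure_lt_top m W).ne
  have hVne : m (V k) ≠ ⊤ := (measure_lt_top m (V k)).ne
  have hWV : c * (m (V k)).toReal < (m W).toReal := by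
    have h := hVinv k
    have h' : (ENNReal.ofReal c * m (V k)).toReal < (m W).toReal :=
      (ENNReal.toReal_lt_toReal (by finiteness) hWne).2 h
    rwa [ENNReal.toReal_mul, ENNReal.toReal_ofReal hc.1.le] at h'
  set a : ℝ := (m A).toReal with ha
  have hapos : 0 < a := ENNReal.toReal_pos hApos.ne' (measure_lt_top m A).ne
  set f : X → ℝ := fun x => ∑ g ∈ F k, w g * A.indicator (fun _ => (1 : ℝ)) (T g⁻¹ x)
    with hfdef
  have hint : Integrable (fun x => |f x - a|) m := by
    apply Integrable.abs
    apply Integrable.sub _ (integrable_const a)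
    apply integrable_finset_sum
    intro g hg
    have h1 : Integrable (A.indicator (fun _ => (1 : ℝ))) m :=
      (integrable_const (1 : ℝ)).indicator hAmeas
    have h2 : Integrable ((A.indicator (fun _ => (1 : ℝ))) ∘ T g⁻¹) m :=
      ((hTmp g⁻¹).integrable_comp h1.aestronglyMeasurable).2 h1
    exact h2.const_mul _
  have hf0 : ∀ x ∈ W, f x = 0 := by
    intro x hx
    apply Finset.sum_eq_zero
    intro g hg
    rw [Set.indicator_of_notMem (hAV _ (hWsub x hx g hg)), mul_zero]
  have key : a * (m W).toReal ≤ ∫ x, |f x - a| ∂m := by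
    calc a * (m W).toReal = ∫ _ in W, a ∂m := by
          rw [setIntegral_const, smul_eq_mul, mul_comm]; rfl
      _ = ∫ x in W, |f x - a| ∂m := by
          refine setIntegral_congr_fun hWmeas ?_
          intro x hx
          simp only
          rw [hf0 x hx]
          simp [abs_of_nonneg hapos.le]
      _ ≤ ∫ x, |f x - a| ∂m :=
          setIntegral_le_integral hint (Filter.Eventually.of_forall fun x => abs_nonneg _)
  calc c * (m (V k)).toReal * (m A).toReal < (m W).toReal * a :=
        mul_lt_mul_of_pos_right hWV hapos
    _ = a * (m W).toReal := mul_comm _ _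
    _ ≤ ∫ x, |f x - a| ∂m := key
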